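/- On the open set Ω = {(t,x) ∈ ℝ² : sin(2t) ≠ 0}, the function u(t,x) = 2·sin(2t)/(cosh(2x) − cos(2t)) is well defined (the denominator is positive there), nonvanishing, and satisfies the fast diffusion equation u_t = ∂/∂x (u_x / u). -/

import Mathlib

/-- Partial derivative with respect to the first variable (time). -/
noncomputable def pt (u : ℝ × ℝ → ℝ) (p : ℝ × ℝ) : ℝ :=
  deriv (fun s => u (s, p.2)) p.1

/-- Partial derivative with respect to the second variable (space). -/
noncomputable def px (u : ℝ × ℝ → ℝ) (p : ℝ × ℝ) : ℝ :=
  deriv (fun y => u (p.1, y)) p.2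

/-- The non-Lie exact solution `u = 2 sin(2t)/(cosh(2x) − cos(2t))` of the fast diffusion
equation `u_t = ∂/∂x (u_x / u)`: on `{sin(2t) ≠ 0}` the denominator is positive,
`u` is nonvanishing, and `u` solves the equation. -/
theorem fast_diffusion_solution_mixed
    (u : ℝ × ℝ → ℝ)
    (hu : u = fun p => 2 * Real.sin (2 * p.1) / (Real.cosh (2 * p.2) - Real.cos (2 * p.1)))
    (Ω : Set (ℝ × ℝ)) (hΩ : Ω = {p : ℝ × ℝ | Real.sin (2 * p.1) ≠ 0}) :
    ∀ p ∈ Ω,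
      0 < Real.cosh (2 * p.2) - Real.cos (2 * p.1) ∧
      u p ≠ 0 ∧
      pt u p = px (fun q => px u q / u q) p := by
  subst hu hΩ
  rintro ⟨t, x⟩ hp
  simp only [Set.mem_setOf_eq] at hp
  have hs : Real.sin (2 * t) ≠ 0 := hp
  have hc1 : Real.cos (2 * t) < 1 := by
    rcases lt_or_eq_of_le (Real.cos_le_one (2 * t)) with h | h
    · exact h
    · exfalso; apply hs
      nlinarith [Real.sin_sq_add_cos_sq (2 * t)]
  have hD : ∀ y : ℝ, 0 < Real.cosh (2 * y) - Real.cos (2 * t) := by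
    intro y; nlinarith [Real.one_le_cosh (2 * y)]
  have hDne : ∀ y : ℝ, Real.cosh (2 * y) - Real.cos (2 * t) ≠ 0 :=
    fun y => ne_of_gt (hD y)
  -- derivative of the denominator in x
  have hDx : ∀ y : ℝ, HasDerivAt (fun y' : ℝ => Real.cosh (2 * y') - Real.cos (2 * t))
      (2 * Real.sinh (2 * y)) y := by
    intro y
    have h1 : HasDerivAt (fun y' : ℝ => 2 * y') 2 y := by
      simpa using (hasDerivAt_id y).const_mul 2
    have := (h1.cosh).sub_const (Real.cos (2 * t))
    exact this.congr_deriv (by ring)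
  -- x-derivative of u at (t, y)
  have hux : ∀ y : ℝ, HasDerivAt (fun y' : ℝ =>
      2 * Real.sin (2 * t) / (Real.cosh (2 * y') - Real.cos (2 * t)))
      (-(2 * Real.sin (2 * t) * (2 * Real.sinh (2 * y))) /
        (Real.cosh (2 * y) - Real.cos (2 * t)) ^ 2) y := by
    intro y
    have := (hasDerivAt_const y (2 * Real.sin (2 * t))).div (hDx y) (hDne y)
    exact this.congr_deriv (by ring)
  have hpx : ∀ y : ℝ, px (fun p => 2 * Real.sin (2 * p.1) /
      (Real.cosh (2 * p.2) - Real.cos (2 * p.1))) (t, y) =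
      -(2 * Real.sin (2 * t) * (2 * Real.sinh (2 * y))) /
        (Real.cosh (2 * y) - Real.cos (2 * t)) ^ 2 := by
    intro y
    exact (hux y).deriv
  refine ⟨hD x, div_ne_zero (by simpa using hs) (hDne x), ?_⟩
  -- the ratio u_x / u simplifies
  have hgfun : (fun y : ℝ => deriv (fun y' : ℝ => 2 * Real.sin (2 * t) /
        (Real.cosh (2 * y') - Real.cos (2 * t))) y /
        (2 * Real.sin (2 * t) / (Real.cosh (2 * y) - Real.cos (2 * t)))) =
      fun y : ℝ => -2 * Real.sinh (2 * y) / (Real.cosh (2 * y) - Real.cos (2 * t)) := by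
    funext y
    rw [(hux y).deriv]
    rw [div_eq_div_iff (div_ne_zero (by simpa using hs) (hDne y)) (hDne y),
      div_mul_eq_mul_div, mul_div_assoc, pow_two,
      div_mul_cancel_left₀ (hDne y)]
    ring
  -- derivative of the ratio in x
  have hgx : HasDerivAt (fun y : ℝ =>
      -2 * Real.sinh (2 * y) / (Real.cosh (2 * y) - Real.cos (2 * t)))
      ((-2 * (2 * Real.cosh (2 * x)) * (Real.cosh (2 * x) - Real.cos (2 * t)) -
        -2 * Real.sinh (2 * x) * (2 * Real.sinh (2 * x))) /
        (Real.cosh (2 * x) - Real.cos (2 * t)) ^ 2) x := by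
    have h1 : HasDerivAt (fun y' : ℝ => 2 * y') 2 x := by
      simpa using (hasDerivAt_id x).const_mul 2
    have hnum : HasDerivAt (fun y : ℝ => -2 * Real.sinh (2 * y))
        (-2 * (2 * Real.cosh (2 * x))) x := by
      have := (h1.sinh).const_mul (-2 : ℝ)
      exact this.congr_deriv (by ring)
    have := hnum.div (hDx x) (hDne x)
    exact this
  -- t-derivative of u at (t, x)
  have hut : HasDerivAt (fun s' : ℝ =>
      2 * Real.sin (2 * s') / (Real.cosh (2 * x) - Real.cos (2 * s')))
      ((2 * (2 * Real.cos (2 * t)) * (Real.cosh (2 * x) - Real.cos (2 * t)) -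
        2 * Real.sin (2 * t) * (2 * Real.sin (2 * t))) /
        (Real.cosh (2 * x) - Real.cos (2 * t)) ^ 2) t := by
    have h1 : HasDerivAt (fun s' : ℝ => 2 * s') 2 t := by
      simpa using (hasDerivAt_id t).const_mul 2
    have hnum : HasDerivAt (fun s' : ℝ => 2 * Real.sin (2 * s'))
        (2 * (2 * Real.cos (2 * t))) t := by
      have := (h1.sin).const_mul (2 : ℝ)
      exact this.congr_deriv (by ring)
    have hden : HasDerivAt (fun s' : ℝ => Real.cosh (2 * x) - Real.cos (2 * s'))
        (2 * Real.sin (2 * t)) t := by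
      have := (h1.cos).const_sub (Real.cosh (2 * x))
      exact this.congr_deriv (by ring)
    have := hnum.div hden (hDne x)
    exact this
  have hL : pt (fun p => 2 * Real.sin (2 * p.1) /
      (Real.cosh (2 * p.2) - Real.cos (2 * p.1))) (t, x) =
      (2 * (2 * Real.cos (2 * t)) * (Real.cosh (2 * x) - Real.cos (2 * t)) -
        2 * Real.sin (2 * t) * (2 * Real.sin (2 * t))) /
        (Real.cosh (2 * x) - Real.cos (2 * t)) ^ 2 := hut.deriv
  have hR : px (fun q => px (fun p => 2 * Real.sin (2 * p.1) /
        (Real.cosh (2 * p.2) - Real.cos (2 * p.1))) q /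
        (2 * Real.sin (2 * q.1) / (Real.cosh (2 * q.2) - Real.cos (2 * q.1)))) (t, x) =
      ((-2 * (2 * Real.cosh (2 * x)) * (Real.cosh (2 * x) - Real.cos (2 * t)) -
        -2 * Real.sinh (2 * x) * (2 * Real.sinh (2 * x))) /
        (Real.cosh (2 * x) - Real.cos (2 * t)) ^ 2) := by
    unfold px
    simp only
    rw [hgfun]
    exact hgx.deriv
  rw [hL, hR]
  rw [div_eq_div_iff (pow_ne_zero 2 (hDne x)) (pow_ne_zero 2 (hDne x))]
  nlinarith [Real.sin_sq_add_cos_sq (2 * t), Real.cosh_sq (2 * x),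
    sq_nonneg (Real.cosh (2 * x) - Real.cos (2 * t))]
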